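/- Let E be a 2-coloured graph and let C be a complete collection of squares in E. If μ : E_{2,m} → E and ν : E_{2,n} → E are C-compatible coloured-graph morphisms such that s(μ) = r(ν), then there exists a unique C-compatible coloured-graph morphism μν : E_{2,m+n} → E such that (μν)|_{E_{2,m}} = μ and (μν)|*_{E_{2,[m,m+n]}} = ν. -/

import Mathlib

/-- A 2-coloured graph: a directed graph `(E⁰, E¹, r, s)` together with a colour map
`c : E¹ → Bool` (`false` is the colour `c₁`, `true` the colour `c₂`). -/
structure TwoColouredGraph where
  V : Type
  Edge : Type
  r : Edge → V
  s : Edge → V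
  c : Edge → Bool

/-- A coloured-graph morphism: a graph morphism preserving colours. -/
structure CGMor (F E : TwoColouredGraph) where
  onV : F.V → E.V
  onE : F.Edge → E.Edge
  map_r : ∀ e, E.r (onE e) = onV (F.r e)
  map_s : ∀ e, E.s (onE e) = onV (F.s e)
  map_c : ∀ e, E.c (onE e) = F.c e

/-- `x` is a path (finite sequence of composable edges) with range `v`;
vertices are regarded as the paths of length 0. -/
def IsPathFrom (E : TwoColouredGraph) (v : E.V) (x : List E.Edge) : Prop :=
  (∀ e ∈ x.head?, E.r e = v) ∧ List.Chain' (fun e f => E.s e = E.r f) x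

/-- The standard basis vectors `e₁, e₂` of `ℕ²`, indexed by colour. -/
def vec : Bool → ℕ × ℕ
  | false => (1, 0)
  | true => (0, 1)

theorem le_add_vec (p : ℕ × ℕ) (i : Bool) : p ≤ p + vec i :=
  Prod.le_def.mpr ⟨Nat.le_add_right _ _, Nat.le_add_right _ _⟩

theorem zero_le2 (p : ℕ × ℕ) : (0 : ℕ × ℕ) ≤ p :=
  Prod.le_def.mpr ⟨Nat.zero_le _, Nat.zero_le _⟩

theorem le_self_add2 (p q : ℕ × ℕ) : p ≤ p + q :=
  Prod.le_def.mpr ⟨Nat.le_add_right _ _, Nat.le_add_right _ _⟩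

/-- The model 2-coloured graph `E_{2,m}`: vertices `{n ∈ ℕ² : n ≤ m}` and, whenever
`n, n + eᵢ ≤ m`, an edge `n + vᵢ` of colour `i` from `n + eᵢ` to `n`. -/
def model2 (m : ℕ × ℕ) : TwoColouredGraph where
  V := {n : ℕ × ℕ // n ≤ m}
  Edge := {p : (ℕ × ℕ) × Bool // p.1 + vec p.2 ≤ m}
  r e := ⟨e.1.1, (le_add_vec e.1.1 e.1.2).trans e.2⟩
  s e := ⟨e.1.1 + vec e.1.2, e.2⟩
  c e := e.1.2

/-- The degree `d*(x) ∈ ℕ²` of a path: the vector counting the edges of each colour. -/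
def deg2 (E : TwoColouredGraph) (x : List E.Edge) : ℕ × ℕ :=
  (x.map fun e => vec (E.c e)).sum

theorem deg2_take_add_drop (E : TwoColouredGraph) (x : List E.Edge) (n : ℕ) :
    deg2 E (x.take n) + deg2 E (x.drop n) = deg2 E x := by
  unfold deg2
  rw [← List.sum_append, ← List.map_append, List.take_append_drop]

theorem deg2_take_le (E : TwoColouredGraph) (x : List E.Edge) (n : ℕ) :
    deg2 E (x.take n) ≤ deg2 E x :=
  (le_self_add2 _ _).trans_eq (deg2_take_add_drop E x n)

theorem deg2_take_add_vec_le (E : TwoColouredGraph) (x : List E.Edge) (n : ℕ)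
    (hn : n < x.length) :
    deg2 E (x.take n) + vec (E.c (x.get ⟨n, hn⟩)) ≤ deg2 E x := by
  have hdrop : deg2 E (x.drop n) = vec (E.c (x.get ⟨n, hn⟩)) + deg2 E (x.drop (n + 1)) := by
    rw [deg2, deg2, List.drop_eq_getElem_cons hn, List.map_cons, List.sum_cons,
      List.get_eq_getElem]
  calc deg2 E (x.take n) + vec (E.c (x.get ⟨n, hn⟩))
      ≤ deg2 E (x.take n) + (vec (E.c (x.get ⟨n, hn⟩)) + deg2 E (x.drop (n + 1))) := by
        rw [← add_assoc]; exact le_self_add2 _ _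
    _ = deg2 E x := by rw [← hdrop, deg2_take_add_drop]

/-- `x` (a path with range `v`) traverses the coloured-graph morphism `λ : E_{2,m} → E`. -/
def Traverses2 (E : TwoColouredGraph) {m : ℕ × ℕ} (lam : CGMor (model2 m) E)
    (v : E.V) (x : List E.Edge) : Prop :=
  ∃ hd : deg2 E x = m,
    lam.onV ⟨0, zero_le2 m⟩ = v ∧
    ∀ (n : ℕ) (hn : n < x.length),
      lam.onE ⟨(deg2 E (x.take n), E.c (x.get ⟨n, hn⟩)),
        hd ▸ deg2_take_add_vec_le E x n hn⟩ = x.get ⟨n, hn⟩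

/-- A square in `E`: a coloured-graph morphism `φ : E_{2,e₁+e₂} → E`. -/
abbrev Square2 (E : TwoColouredGraph) := CGMor (model2 (1, 1)) E

/-- The edge `vᵢ` of `E_{2,e₁+e₂}` with range `0`, of colour `i`. -/
def sqEdge0 (i : Bool) : (model2 (1, 1)).Edge :=
  ⟨((0, 0), i), by cases i <;> decide⟩

/-- The edge `eᵢ + vⱼ` of `E_{2,e₁+e₂}` with range `eᵢ`, of the other colour `j = ¬i`. -/
def sqEdge1 (i : Bool) : (model2 (1, 1)).Edge :=
  ⟨(vec i, !i), by cases i <;> decide⟩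

/-- A collection `C` of squares in `E` is complete if each two-coloured path of length 2 in `E`
factors through a unique square in `C`. -/
def IsComplete2 (E : TwoColouredGraph) (C : Set (Square2 E)) : Prop :=
  ∀ x₁ x₂ : E.Edge, E.s x₁ = E.r x₂ → E.c x₁ ≠ E.c x₂ →
    ∃! φ : Square2 E, φ ∈ C ∧ x₁ = φ.onE (sqEdge0 (E.c x₁)) ∧ x₂ = φ.onE (sqEdge1 (E.c x₁))

theorem occ_vertex_le {z n m : ℕ × ℕ} (hz : z ≤ (1, 1)) (h : n + (1, 1) ≤ m) : z + n ≤ m :=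
  le_trans (add_le_add_left hz n) (le_of_eq (add_comm _ _) |>.trans h)

theorem occ_edge_le {u n m : ℕ × ℕ} {i : Bool} (hz : u + vec i ≤ (1, 1))
    (h : n + (1, 1) ≤ m) : (u + n) + vec i ≤ m := by
  rw [add_right_comm]
  exact occ_vertex_le hz h

/-- The square `φ` occurs in `λ : E_{2,m} → E` if `φ` is the translation of `λ` by some
`n ∈ ℕ²`, i.e. `φ(x) = λ(x + n)` on vertices and edges. -/
def Occurs2 {E : TwoColouredGraph} {m : ℕ × ℕ} (φ : Square2 E)
    (lam : CGMor (model2 m) E) : Prop :=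
  ∃ (n : ℕ × ℕ) (h : n + (1, 1) ≤ m),
    (∀ z : (model2 (1, 1)).V, lam.onV ⟨z.1 + n, occ_vertex_le z.2 h⟩ = φ.onV z) ∧
    (∀ e : (model2 (1, 1)).Edge,
      lam.onE ⟨(e.1.1 + n, e.1.2), occ_edge_le e.2 h⟩ = φ.onE e)

/-- `λ` is `C`-compatible if every square occurring in `λ` belongs to `C`. -/
def Compatible2 {E : TwoColouredGraph} (C : Set (Square2 E)) {m : ℕ × ℕ}
    (lam : CGMor (model2 m) E) : Prop :=
  ∀ φ : Square2 E, Occurs2 φ lam → φ ∈ C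

/-- The restriction `λ|_{E_{2,p}}` of `λ : E_{2,q} → E` for `p ≤ q`. -/
def restrict2 {E : TwoColouredGraph} {q : ℕ × ℕ} (lam : CGMor (model2 q) E)
    (p : ℕ × ℕ) (h : p ≤ q) : CGMor (model2 p) E where
  onV z := lam.onV ⟨z.1, z.2.trans h⟩
  onE e := lam.onE ⟨e.1, e.2.trans h⟩
  map_r e := lam.map_r _
  map_s e := lam.map_s _
  map_c e := lam.map_c _

/-- The translated restriction `λ|*_{E_{2,[p,p+n]}} : E_{2,n} → E`, `a ↦ λ(p + a)`,
of `λ : E_{2,q} → E` where `p + n ≤ q`. -/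
def starRestrict2 {E : TwoColouredGraph} {q : ℕ × ℕ} (lam : CGMor (model2 q) E)
    (p n : ℕ × ℕ) (h : p + n ≤ q) : CGMor (model2 n) E where
  onV z := lam.onV ⟨p + z.1, (add_le_add_right z.2 p).trans h⟩
  onE e := lam.onE ⟨(p + e.1.1, e.1.2), by
    rw [add_assoc]; exact (add_le_add_right e.2 p).trans h⟩
  map_r e := lam.map_r _
  map_s e := by
    exact (lam.map_s _).trans
      (congrArg lam.onV (Subtype.ext (add_assoc p e.1.1 (vec e.1.2))))
  map_c e := lam.map_c _

/-- The model graph `E_{2,0}` has no edges. -/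
theorem model2_zero_no_edge (e : (model2 (0, 0)).Edge) : False := by
  obtain ⟨⟨u, i⟩, h⟩ := e
  rw [Prod.le_def] at h
  cases i <;> simp [vec] at h

/-- The identity morphism `λ_v : E_{2,0} → E`, `λ_v(0) = v`. -/
def idMor2 (E : TwoColouredGraph) (v : E.V) : CGMor (model2 (0, 0)) E where
  onV _ := v
  onE e := (model2_zero_no_edge e).elim
  map_r e := (model2_zero_no_edge e).elim
  map_s e := (model2_zero_no_edge e).elim
  map_c e := (model2_zero_no_edge e).elim

theorem idMor2_compatible (E : TwoColouredGraph) (C : Set (Square2 E)) (v : E.V) :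
    Compatible2 C (idMor2 E v) := by
  rintro φ ⟨n, h, -, -⟩
  exact absurd h.2 (by simp)

/-- The set `Λ = ⋃_{m ∈ ℕ²} Λ^m` of all `C`-compatible coloured-graph morphisms into `E`. -/
def Lam2 (E : TwoColouredGraph) (C : Set (Square2 E)) : Type :=
  Σ m : ℕ × ℕ, {lam : CGMor (model2 m) E // Compatible2 C lam}

/-- The degree `d(λ) = m` of `λ : E_{2,m} → E`. -/
def Lam2.deg {E : TwoColouredGraph} {C : Set (Square2 E)} (α : Lam2 E C) : ℕ × ℕ := α.1

/-- The range `r(λ) = λ(0)`. -/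
def Lam2.rV {E : TwoColouredGraph} {C : Set (Square2 E)} (α : Lam2 E C) : E.V :=
  α.2.1.onV ⟨0, zero_le2 α.1⟩

/-- The source `s(λ) = λ(d(λ))`. -/
def Lam2.sV {E : TwoColouredGraph} {C : Set (Square2 E)} (α : Lam2 E C) : E.V :=
  α.2.1.onV ⟨α.1, le_refl α.1⟩

/-- The identity `λ_v` as an element of `Λ`. -/
def idLam2 (E : TwoColouredGraph) (C : Set (Square2 E)) (v : E.V) : Lam2 E C :=
  ⟨(0, 0), idMor2 E v, idMor2_compatible E C v⟩

/-- `γ` is the composition `μν`, i.e. `d(γ) = d(μ) + d(ν)`, `γ|_{E_{2,d(μ)}} = μ` and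
`γ|*_{E_{2,[d(μ), d(μ)+d(ν)]}} = ν`. -/
def IsComp2 {E : TwoColouredGraph} {C : Set (Square2 E)} (α β γ : Lam2 E C) : Prop :=
  ∃ h : γ.1 = α.1 + β.1,
    restrict2 γ.2.1 α.1 ((le_self_add2 α.1 β.1).trans_eq h.symm) = α.2.1 ∧
    starRestrict2 γ.2.1 α.1 β.1 h.ge = β.2.1

namespace UC2

section Aux

variable {E : TwoColouredGraph}

theorem CGMor.ext' {F : TwoColouredGraph} {f g : CGMor F E}
    (hV : ∀ v, f.onV v = g.onV v) (hE : ∀ e, f.onE e = g.onE e) : f = g := by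
  cases f; cases g
  simp only [CGMor.mk.injEq]
  exact ⟨funext hV, funext hE⟩

def cp : Bool → ℕ × ℕ → ℕ
  | false, p => p.1
  | true, p => p.2

def mk2 : Bool → ℕ → ℕ → ℕ × ℕ
  | false, a, b => (a, b)
  | true, a, b => (b, a)

theorem cp_mk2_self (i : Bool) (a b : ℕ) : cp i (mk2 i a b) = a := by cases i <;> rfl
theorem cp_mk2_not (i : Bool) (a b : ℕ) : cp (!i) (mk2 i a b) = b := by cases i <;> rfl
theorem mk2_cp (i : Bool) (u : ℕ × ℕ) : mk2 i (cp i u) (cp (!i) u) = u := by cases i <;> rfl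

theorem le_iff_cp (i : Bool) (u v : ℕ × ℕ) :
    u ≤ v ↔ cp i u ≤ cp i v ∧ cp (!i) u ≤ cp (!i) v := by
  cases i <;> simp [cp, Prod.le_def] <;> tauto

theorem mk2_add_vec_self (i : Bool) (a b : ℕ) : mk2 i a b + vec i = mk2 i (a + 1) b := by
  cases i <;> rfl
theorem mk2_add_vec_not (i : Bool) (a b : ℕ) : mk2 i a b + vec (!i) = mk2 i a (b + 1) := by
  cases i <;> rfl
theorem cp_add (b : Bool) (u v : ℕ × ℕ) : cp b (u + v) = cp b u + cp b v := by cases b <;> rfl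
theorem cp_vec_self (i : Bool) : cp i (vec i) = 1 := by cases i <;> rfl
theorem cp_vec_not (i : Bool) : cp (!i) (vec i) = 0 := by cases i <;> rfl

theorem onV_eq_r {P : ℕ × ℕ} (f : CGMor (model2 P) E) (u : ℕ × ℕ) (b : Bool)
    (h : u + vec b ≤ P) :
    f.onV ⟨u, le_trans (le_add_vec u b) h⟩ = E.r (f.onE ⟨(u, b), h⟩) := (f.map_r ⟨(u, b), h⟩).symm

theorem onV_eq_s {P : ℕ × ℕ} (f : CGMor (model2 P) E) (u : ℕ × ℕ) (b : Bool)
    (h : u + vec b ≤ P) :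
    f.onV ⟨u + vec b, h⟩ = E.s (f.onE ⟨(u, b), h⟩) := (f.map_s ⟨(u, b), h⟩).symm

theorem square_edge_cases (e : (model2 (1, 1)).Edge) :
    e = sqEdge0 false ∨ e = sqEdge0 true ∨ e = sqEdge1 false ∨ e = sqEdge1 true := by
  obtain ⟨⟨⟨a, b⟩, c⟩, h⟩ := e
  cases c
  · simp only [Prod.le_def, vec, Prod.fst_add, Prod.snd_add] at h
    obtain ⟨rfl, hb⟩ : a = 0 ∧ (b = 0 ∨ b = 1) := by omega
    rcases hb with rfl | rfl
    · exact Or.inl rfl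
    · exact Or.inr (Or.inr (Or.inr rfl))
  · simp only [Prod.le_def, vec, Prod.fst_add, Prod.snd_add] at h
    obtain ⟨ha, rfl⟩ : (a = 0 ∨ a = 1) ∧ b = 0 := by omega
    rcases ha with rfl | rfl
    · exact Or.inr (Or.inl rfl)
    · exact Or.inr (Or.inr (Or.inl rfl))

theorem square_edge_cases' (i : Bool) (e : (model2 (1, 1)).Edge) :
    e = sqEdge0 i ∨ e = sqEdge0 (!i) ∨ e = sqEdge1 i ∨ e = sqEdge1 (!i) := by
  cases i <;> rcases square_edge_cases e with rfl | rfl | rfl | rfl <;> simp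

theorem square_ext {φ ψ : Square2 E} (h : ∀ e, φ.onE e = ψ.onE e) : φ = ψ := by
  refine CGMor.ext' (fun z => ?_) h
  obtain ⟨⟨a, b⟩, hz⟩ := z
  simp only [Prod.le_def] at hz
  obtain ⟨ha, hb⟩ := hz
  interval_cases a <;> interval_cases b
  · exact (onV_eq_r φ (0, 0) false (by decide)).trans
      ((congrArg E.r (h _)).trans (onV_eq_r ψ (0, 0) false (by decide)).symm)
  · exact (onV_eq_s φ (0, 0) true (by decide)).trans
      ((congrArg E.s (h _)).trans (onV_eq_s ψ (0, 0) true (by decide)).symm)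
  · exact (onV_eq_s φ (0, 0) false (by decide)).trans
      ((congrArg E.s (h _)).trans (onV_eq_s ψ (0, 0) false (by decide)).symm)
  · exact (onV_eq_s φ (1, 0) true (by decide)).trans
      ((congrArg E.s (h _)).trans (onV_eq_s ψ (1, 0) true (by decide)).symm)

def cellSquare {P : ℕ × ℕ} (lam : CGMor (model2 P) E) (b₀ : ℕ × ℕ)
    (h : b₀ + (1, 1) ≤ P) : Square2 E where
  onV z := lam.onV ⟨z.1 + b₀, occ_vertex_le z.2 h⟩
  onE e := lam.onE ⟨(e.1.1 + b₀, e.1.2), occ_edge_le e.2 h⟩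
  map_r e := lam.map_r _
  map_s e := by
    exact (lam.map_s _).trans (congrArg lam.onV (Subtype.ext (add_right_comm _ _ _)))
  map_c e := lam.map_c _

theorem cellSquare_occurs {P : ℕ × ℕ} (lam : CGMor (model2 P) E) (b₀ : ℕ × ℕ)
    (h : b₀ + (1, 1) ≤ P) : Occurs2 (cellSquare lam b₀ h) lam :=
  ⟨b₀, h, fun _ => rfl, fun _ => rfl⟩

theorem restrict2_compatible {C : Set (Square2 E)} {q : ℕ × ℕ} {lam : CGMor (model2 q) E}
    (h : Compatible2 C lam) (p : ℕ × ℕ) (hpq : p ≤ q) :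
    Compatible2 C (restrict2 lam p hpq) := by
  rintro φ ⟨b, hb, hv, he⟩
  exact h φ ⟨b, hb.trans hpq, fun z => hv z, fun e => he e⟩

theorem starRestrict2_compatible {C : Set (Square2 E)} {q : ℕ × ℕ} {lam : CGMor (model2 q) E}
    (h : Compatible2 C lam) (p n : ℕ × ℕ) (hpn : p + n ≤ q) :
    Compatible2 C (starRestrict2 lam p n hpn) := by
  rintro φ ⟨b, hb, hv, he⟩
  refine h φ ⟨p + b, by rw [add_assoc]; exact le_trans (add_le_add_right hb p) hpn,
    fun z => ?_, fun e => ?_⟩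
  · rw [← hv z]
    exact congrArg lam.onV (Subtype.ext (by dsimp; ring))
  · rw [← he e]
    exact congrArg lam.onE (Subtype.ext (by dsimp; rw [Prod.ext_iff]; exact ⟨by dsimp; ring, rfl⟩))

end Aux

section Append

variable {E : TwoColouredGraph} {C : Set (Square2 E)}

/-- The vertical edge of `lam`'s rectangle along the far face, at perpendicular height `k`. -/
def vEdge (i : Bool) (p : ℕ × ℕ) (k : ℕ) (hk : k + 1 ≤ cp (!i) p) : (model2 p).Edge :=
  ⟨(mk2 i (cp i p) k, !i), by
    rw [mk2_add_vec_not, le_iff_cp i, cp_mk2_self, cp_mk2_not]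
    exact ⟨le_refl _, hk⟩⟩

/-- The vertex of the far face of `p` at height `cp (!i) p - t`. -/
def rpos (i : Bool) (p : ℕ × ℕ) (t : ℕ) : (model2 p).V :=
  ⟨mk2 i (cp i p) (cp (!i) p - t), by
    rw [le_iff_cp i, cp_mk2_self, cp_mk2_not]
    exact ⟨le_refl _, Nat.sub_le _ _⟩⟩

/-- The chain of new edges of colour `i`, built downward from the appended edge `g`. -/
noncomputable def F (hC : IsComplete2 E C) (i : Bool) (p : ℕ × ℕ) (lam : CGMor (model2 p) E)
    (g : E.Edge) (hgc : E.c g = i) (hgr : E.r g = lam.onV ⟨p, le_refl p⟩) :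
    (t : ℕ) → {e : E.Edge // E.c e = i ∧ E.r e = lam.onV (rpos i p t)}
  | 0 => ⟨g, hgc, hgr.trans (congrArg lam.onV (Subtype.ext (mk2_cp i p).symm))⟩
  | t + 1 =>
    if h : t + 1 ≤ cp (!i) p then
      have hs : E.s (lam.onE (vEdge i p (cp (!i) p - t - 1) (by omega))) =
          E.r (F hC i p lam g hgc hgr t).1 := by
        rw [lam.map_s, (F hC i p lam g hgc hgr t).2.2]
        refine congrArg lam.onV (Subtype.ext ?_)
        show mk2 i (cp i p) (cp (!i) p - t - 1) + vec (!i) = mk2 i (cp i p) (cp (!i) p - t)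
        rw [mk2_add_vec_not]
        congr 1
        omega
      have hc : E.c (lam.onE (vEdge i p (cp (!i) p - t - 1) (by omega))) ≠
          E.c (F hC i p lam g hgc hgr t).1 := by
        rw [lam.map_c, (F hC i p lam g hgc hgr t).2.1]
        show (!i) ≠ i
        simp
      have hspec := (hC _ _ hs hc).choose_spec.1
      have hcv : E.c (lam.onE (vEdge i p (cp (!i) p - t - 1) (by omega))) = !i :=
        lam.map_c _
      ⟨(hC _ _ hs hc).choose.onE (sqEdge0 i), (hC _ _ hs hc).choose.map_c _, by
        have h1 : lam.onE (vEdge i p (cp (!i) p - t - 1) (by omega)) =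
            (hC _ _ hs hc).choose.onE (sqEdge0 (!i)) :=
          hspec.2.1.trans (congrArg (fun b => (hC _ _ hs hc).choose.onE (sqEdge0 b)) hcv)
        have h2 : E.r (lam.onE (vEdge i p (cp (!i) p - t - 1) (by omega))) =
            (hC _ _ hs hc).choose.onV ((model2 (1, 1)).r (sqEdge0 i)) :=
          (congrArg E.r h1).trans ((hC _ _ hs hc).choose.map_r (sqEdge0 (!i)))
        have h3 : E.r (lam.onE (vEdge i p (cp (!i) p - t - 1) (by omega))) =
            lam.onV (rpos i p (t + 1)) := by
          rw [lam.map_r]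
          refine congrArg lam.onV (Subtype.ext ?_)
          show mk2 i (cp i p) (cp (!i) p - t - 1) = mk2 i (cp i p) (cp (!i) p - (t + 1))
          congr 1 <;> omega
        exact ((hC _ _ hs hc).choose.map_r _).trans (h2.symm.trans h3)⟩
    else
      ⟨(F hC i p lam g hgc hgr t).1, (F hC i p lam g hgc hgr t).2.1,
        (F hC i p lam g hgc hgr t).2.2.trans (congrArg lam.onV (Subtype.ext (by
          show mk2 i (cp i p) (cp (!i) p - t) = mk2 i (cp i p) (cp (!i) p - (t + 1))
          congr 1 <;> omega)))⟩


theorem newV2 (i : Bool) {p z : ℕ × ℕ} (hz : z ≤ p + vec i) (h1 : ¬z ≤ p) :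
    cp i z = cp i p + 1 ∧ cp (!i) z ≤ cp (!i) p := by
  obtain ⟨z1, z2⟩ := z; obtain ⟨p1, p2⟩ := p
  cases i <;>
    [skip; skip] <;>
  · simp only [cp, vec, Bool.not_false, Bool.not_true, Prod.le_def, Prod.mk_add_mk] at *
    omega

theorem newE_i (i : Bool) {p u : ℕ × ℕ} (he : u + vec i ≤ p + vec i) (h1 : ¬u + vec i ≤ p) :
    cp i u = cp i p ∧ cp (!i) u ≤ cp (!i) p := by
  obtain ⟨z1, z2⟩ := u; obtain ⟨p1, p2⟩ := p
  cases i <;>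
    [skip; skip] <;>
  · simp only [cp, vec, Bool.not_false, Bool.not_true, Prod.le_def, Prod.mk_add_mk] at *
    omega

theorem newE_not (i : Bool) {p u : ℕ × ℕ} (he : u + vec (!i) ≤ p + vec i)
    (h1 : ¬u + vec (!i) ≤ p) :
    cp i u = cp i p + 1 ∧ cp (!i) u + 1 ≤ cp (!i) p := by
  obtain ⟨z1, z2⟩ := u; obtain ⟨p1, p2⟩ := p
  cases i <;>
    [skip; skip] <;>
  · simp only [cp, vec, Bool.not_false, Bool.not_true, Prod.le_def, Prod.mk_add_mk] at *
    omega

theorem newSq (i : Bool) {p b₀ : ℕ × ℕ} (h : b₀ + (1, 1) ≤ p + vec i)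
    (h1 : ¬b₀ + (1, 1) ≤ p) :
    cp i b₀ = cp i p ∧ cp (!i) b₀ + 1 ≤ cp (!i) p := by
  obtain ⟨z1, z2⟩ := b₀; obtain ⟨p1, p2⟩ := p
  cases i <;>
    [skip; skip] <;>
  · simp only [cp, vec, Bool.not_false, Bool.not_true, Prod.le_def, Prod.mk_add_mk] at *
    omega

theorem cell_le (i : Bool) {p : ℕ × ℕ} {k : ℕ} (hk : k + 1 ≤ cp (!i) p) :
    mk2 i (cp i p) k + (1, 1) ≤ p + vec i := by
  obtain ⟨p1, p2⟩ := p
  cases i <;> simp_all [cp, mk2, vec, Prod.le_def, Prod.mk_add_mk]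

variable (hC : IsComplete2 E C) (i : Bool) (p : ℕ × ℕ) (lam : CGMor (model2 p) E)
  (g : E.Edge) (hgc : E.c g = i) (hgr : E.r g = lam.onV ⟨p, le_refl p⟩)

theorem vE_s (t : ℕ) (h : t + 1 ≤ cp (!i) p) :
    E.s (lam.onE (vEdge i p (cp (!i) p - t - 1) (by omega))) =
      E.r (F hC i p lam g hgc hgr t).1 := by
  rw [lam.map_s, (F hC i p lam g hgc hgr t).2.2]
  refine congrArg lam.onV (Subtype.ext ?_)
  show mk2 i (cp i p) (cp (!i) p - t - 1) + vec (!i) = mk2 i (cp i p) (cp (!i) p - t)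
  rw [mk2_add_vec_not]
  congr 1 <;> omega

theorem vE_c (t : ℕ) (h : t + 1 ≤ cp (!i) p) :
    E.c (lam.onE (vEdge i p (cp (!i) p - t - 1) (by omega))) ≠
      E.c (F hC i p lam g hgc hgr t).1 := by
  rw [lam.map_c, (F hC i p lam g hgc hgr t).2.1]
  show (!i) ≠ i
  simp

theorem vE_colour (t : ℕ) (h : t + 1 ≤ cp (!i) p) :
    E.c (lam.onE (vEdge i p (cp (!i) p - t - 1) (by omega))) = !i :=
  lam.map_c _

/-- The filling square at level `t` below the appended edge. -/
noncomputable def sqAt (t : ℕ) (h : t + 1 ≤ cp (!i) p) : Square2 E :=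
  (hC _ _ (vE_s hC i p lam g hgc hgr t h) (vE_c hC i p lam g hgc hgr t h)).choose

theorem sqAt_spec (t : ℕ) (h : t + 1 ≤ cp (!i) p) :
    sqAt hC i p lam g hgc hgr t h ∈ C ∧
      lam.onE (vEdge i p (cp (!i) p - t - 1) (by omega)) =
        (sqAt hC i p lam g hgc hgr t h).onE
          (sqEdge0 (E.c (lam.onE (vEdge i p (cp (!i) p - t - 1) (by omega))))) ∧
      (F hC i p lam g hgc hgr t).1 =
        (sqAt hC i p lam g hgc hgr t h).onE
          (sqEdge1 (E.c (lam.onE (vEdge i p (cp (!i) p - t - 1) (by omega))))) :=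
  (hC _ _ (vE_s hC i p lam g hgc hgr t h) (vE_c hC i p lam g hgc hgr t h)).choose_spec.1

theorem sqAt_unique (t : ℕ) (h : t + 1 ≤ cp (!i) p) (ψ : Square2 E) (hψC : ψ ∈ C)
    (h0 : lam.onE (vEdge i p (cp (!i) p - t - 1) (by omega)) =
      ψ.onE (sqEdge0 (E.c (lam.onE (vEdge i p (cp (!i) p - t - 1) (by omega))))))
    (h1 : (F hC i p lam g hgc hgr t).1 =
      ψ.onE (sqEdge1 (E.c (lam.onE (vEdge i p (cp (!i) p - t - 1) (by omega)))))) :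
    ψ = sqAt hC i p lam g hgc hgr t h :=
  (hC _ _ (vE_s hC i p lam g hgc hgr t h) (vE_c hC i p lam g hgc hgr t h)).choose_spec.2
    ψ ⟨hψC, h0, h1⟩

theorem sqAt_mem (t : ℕ) (h : t + 1 ≤ cp (!i) p) : sqAt hC i p lam g hgc hgr t h ∈ C :=
  (sqAt_spec hC i p lam g hgc hgr t h).1

theorem sqAt_e0_not (t : ℕ) (h : t + 1 ≤ cp (!i) p) :
    (sqAt hC i p lam g hgc hgr t h).onE (sqEdge0 (!i)) =
      lam.onE (vEdge i p (cp (!i) p - t - 1) (by omega)) :=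
  ((sqAt_spec hC i p lam g hgc hgr t h).2.1.trans
    (congrArg (fun b => (sqAt hC i p lam g hgc hgr t h).onE (sqEdge0 b))
      (vE_colour i p lam t h))).symm

theorem sqAt_e1_not (t : ℕ) (h : t + 1 ≤ cp (!i) p) :
    (sqAt hC i p lam g hgc hgr t h).onE (sqEdge1 (!i)) = (F hC i p lam g hgc hgr t).1 :=
  ((sqAt_spec hC i p lam g hgc hgr t h).2.2.trans
    (congrArg (fun b => (sqAt hC i p lam g hgc hgr t h).onE (sqEdge1 b))
      (vE_colour i p lam t h))).symm

theorem sqAt_e0_self (t : ℕ) (h : t + 1 ≤ cp (!i) p) :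
    (sqAt hC i p lam g hgc hgr t h).onE (sqEdge0 i) = (F hC i p lam g hgc hgr (t + 1)).1 := by
  conv_rhs => rw [F]
  rw [dif_pos h]
  rfl

noncomputable def extV (z : (model2 (p + vec i)).V) : E.V :=
  if h : z.1 ≤ p then lam.onV ⟨z.1, h⟩
  else E.s (F hC i p lam g hgc hgr (cp (!i) p - cp (!i) z.1)).1

noncomputable def extE (e : (model2 (p + vec i)).Edge) : E.Edge :=
  if h1 : e.1.1 + vec e.1.2 ≤ p then lam.onE ⟨e.1, h1⟩
  else if h2 : e.1.2 = i then (F hC i p lam g hgc hgr (cp (!i) p - cp (!i) e.1.1)).1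
  else
    (sqAt hC i p lam g hgc hgr (cp (!i) p - cp (!i) e.1.1 - 1) (by
      have hb : e.1.2 = !i := by
        cases hbe : e.1.2 <;> cases i <;> simp_all
      have := newE_not i (hb ▸ e.2) (hb ▸ h1)
      omega)).onE (sqEdge1 i)

theorem extV_le (z : ℕ × ℕ) (h : z ≤ p) (pf : z ≤ p + vec i) :
    extV hC i p lam g hgc hgr ⟨z, pf⟩ = lam.onV ⟨z, h⟩ := dif_pos h

theorem extV_new (z : ℕ × ℕ) (h : ¬z ≤ p) (pf : z ≤ p + vec i) :
    extV hC i p lam g hgc hgr ⟨z, pf⟩ =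
      E.s (F hC i p lam g hgc hgr (cp (!i) p - cp (!i) z)).1 := dif_neg h

theorem extE_le (u : ℕ × ℕ) (b : Bool) (h : u + vec b ≤ p) (pf : u + vec b ≤ p + vec i) :
    extE hC i p lam g hgc hgr ⟨(u, b), pf⟩ = lam.onE ⟨(u, b), h⟩ := dif_pos h

theorem extE_newF (u : ℕ × ℕ) (h : ¬u + vec i ≤ p) (pf : u + vec i ≤ p + vec i) :
    extE hC i p lam g hgc hgr ⟨(u, i), pf⟩ =
      (F hC i p lam g hgc hgr (cp (!i) p - cp (!i) u)).1 := by
  show dite _ _ _ = _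
  rw [dif_neg h, dif_pos rfl]

theorem extE_newW (u : ℕ × ℕ) (h : ¬u + vec (!i) ≤ p) (pf : u + vec (!i) ≤ p + vec i)
    (hq : cp (!i) p - cp (!i) u - 1 + 1 ≤ cp (!i) p) :
    extE hC i p lam g hgc hgr ⟨(u, !i), pf⟩ =
      (sqAt hC i p lam g hgc hgr (cp (!i) p - cp (!i) u - 1) hq).onE (sqEdge1 i) := by
  show dite _ _ _ = _
  rw [dif_neg h, dif_neg (Bool.not_ne_self i)]

theorem cp_not_vec (i : Bool) : cp i (vec (!i)) = 0 := by cases i <;> rfl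

theorem extE_newF' (u : ℕ × ℕ) (b : Bool) (hb : b = i) (h : ¬u + vec b ≤ p)
    (pf : u + vec b ≤ p + vec i) :
    extE hC i p lam g hgc hgr ⟨(u, b), pf⟩ =
      (F hC i p lam g hgc hgr (cp (!i) p - cp (!i) u)).1 := by
  subst hb
  exact extE_newF hC _ p lam g hgc hgr u h pf

theorem extE_newW' (u : ℕ × ℕ) (b : Bool) (hb : b = !i) (h : ¬u + vec b ≤ p)
    (pf : u + vec b ≤ p + vec i)
    (hq : cp (!i) p - cp (!i) u - 1 + 1 ≤ cp (!i) p) :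
    extE hC i p lam g hgc hgr ⟨(u, b), pf⟩ =
      (sqAt hC i p lam g hgc hgr (cp (!i) p - cp (!i) u - 1) hq).onE (sqEdge1 i) := by
  subst hb
  exact extE_newW hC i p lam g hgc hgr u h pf hq

/-- The extension of `lam` by the edge `g` appended at the corner `p`. -/
noncomputable def ext2 : CGMor (model2 (p + vec i)) E where
  onV := extV hC i p lam g hgc hgr
  onE := extE hC i p lam g hgc hgr
  map_c e := by
    obtain ⟨⟨u, b⟩, pf⟩ := e
    show E.c (extE hC i p lam g hgc hgr ⟨(u, b), pf⟩) = b
    by_cases h1 : u + vec b ≤ p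
    · rw [extE_le hC i p lam g hgc hgr u b h1 pf]
      exact lam.map_c _
    · by_cases h2 : b = i
      · rw [extE_newF' hC i p lam g hgc hgr u b h2 h1 pf, h2]
        exact (F hC i p lam g hgc hgr _).2.1
      · have hb : b = !i := by cases b <;> cases i <;> simp_all
        have hun : cp i u = cp i p + 1 ∧ cp (!i) u + 1 ≤ cp (!i) p := newE_not i (hb ▸ pf) (hb ▸ h1)
        rw [extE_newW' hC i p lam g hgc hgr u b hb h1 pf (by omega), hb]
        exact (sqAt hC i p lam g hgc hgr _ _).map_c (sqEdge1 i)
  map_r e := by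
    obtain ⟨⟨u, b⟩, pf⟩ := e
    show E.r (extE hC i p lam g hgc hgr ⟨(u, b), pf⟩) =
      extV hC i p lam g hgc hgr ⟨u, le_trans (le_add_vec u b) pf⟩
    by_cases h1 : u + vec b ≤ p
    · rw [extE_le hC i p lam g hgc hgr u b h1 pf,
        extV_le hC i p lam g hgc hgr u (le_trans (le_add_vec u b) h1) _]
      exact lam.map_r ⟨(u, b), h1⟩
    · by_cases h2 : b = i
      · have hui : cp i u = cp i p ∧ cp (!i) u ≤ cp (!i) p := newE_i i (h2 ▸ pf) (h2 ▸ h1)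
        have hup : u ≤ p := by
          rw [le_iff_cp i]
          omega
        rw [extE_newF' hC i p lam g hgc hgr u b h2 h1 pf,
          extV_le hC i p lam g hgc hgr u hup _,
          (F hC i p lam g hgc hgr _).2.2]
        refine congrArg lam.onV (Subtype.ext ?_)
        show mk2 i (cp i p) (cp (!i) p - (cp (!i) p - cp (!i) u)) = u
        rw [Nat.sub_sub_self hui.2, ← hui.1, mk2_cp]
      · have hb : b = !i := by cases b <;> cases i <;> simp_all
        have hun : cp i u = cp i p + 1 ∧ cp (!i) u + 1 ≤ cp (!i) p := newE_not i (hb ▸ pf) (hb ▸ h1)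
        have hq : cp (!i) p - cp (!i) u - 1 + 1 ≤ cp (!i) p := by omega
        have hnu : ¬u ≤ p := by
          rw [le_iff_cp i]
          omega
        rw [extE_newW' hC i p lam g hgc hgr u b hb h1 pf hq,
          extV_new hC i p lam g hgc hgr u hnu _]
        calc E.r ((sqAt hC i p lam g hgc hgr (cp (!i) p - cp (!i) u - 1) hq).onE (sqEdge1 i))
            = (sqAt hC i p lam g hgc hgr (cp (!i) p - cp (!i) u - 1) hq).onV
                ((model2 (1, 1)).r (sqEdge1 i)) :=
              (sqAt hC i p lam g hgc hgr (cp (!i) p - cp (!i) u - 1) hq).map_r _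
          _ = (sqAt hC i p lam g hgc hgr (cp (!i) p - cp (!i) u - 1) hq).onV
                ((model2 (1, 1)).s (sqEdge0 i)) :=
              congrArg _ (Subtype.ext (by cases i <;> rfl))
          _ = E.s ((sqAt hC i p lam g hgc hgr (cp (!i) p - cp (!i) u - 1) hq).onE
                (sqEdge0 i)) :=
              ((sqAt hC i p lam g hgc hgr (cp (!i) p - cp (!i) u - 1) hq).map_s _).symm
          _ = E.s (F hC i p lam g hgc hgr (cp (!i) p - cp (!i) u - 1 + 1)).1 := by
              rw [sqAt_e0_self]
          _ = E.s (F hC i p lam g hgc hgr (cp (!i) p - cp (!i) u)).1 :=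
              congrArg (fun t => E.s (F hC i p lam g hgc hgr t).1) (by omega)
  map_s e := by
    obtain ⟨⟨u, b⟩, pf⟩ := e
    show E.s (extE hC i p lam g hgc hgr ⟨(u, b), pf⟩) =
      extV hC i p lam g hgc hgr ⟨u + vec b, pf⟩
    by_cases h1 : u + vec b ≤ p
    · rw [extE_le hC i p lam g hgc hgr u b h1 pf,
        extV_le hC i p lam g hgc hgr (u + vec b) h1 _]
      exact lam.map_s ⟨(u, b), h1⟩
    · by_cases h2 : b = i
      · rw [extE_newF' hC i p lam g hgc hgr u b h2 h1 pf,
          extV_new hC i p lam g hgc hgr (u + vec b) h1 pf]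
        exact congrArg (fun t => E.s (F hC i p lam g hgc hgr t).1)
          (by rw [h2, cp_add, cp_vec_not, Nat.add_zero])
      · have hb : b = !i := by cases b <;> cases i <;> simp_all
        have hun : cp i u = cp i p + 1 ∧ cp (!i) u + 1 ≤ cp (!i) p := newE_not i (hb ▸ pf) (hb ▸ h1)
        have hq : cp (!i) p - cp (!i) u - 1 + 1 ≤ cp (!i) p := by omega
        have hnu : ¬u + vec b ≤ p := h1
        rw [extE_newW' hC i p lam g hgc hgr u b hb h1 pf hq,
          extV_new hC i p lam g hgc hgr (u + vec b) hnu pf]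
        calc E.s ((sqAt hC i p lam g hgc hgr (cp (!i) p - cp (!i) u - 1) hq).onE (sqEdge1 i))
            = (sqAt hC i p lam g hgc hgr (cp (!i) p - cp (!i) u - 1) hq).onV
                ((model2 (1, 1)).s (sqEdge1 i)) :=
              (sqAt hC i p lam g hgc hgr (cp (!i) p - cp (!i) u - 1) hq).map_s _
          _ = (sqAt hC i p lam g hgc hgr (cp (!i) p - cp (!i) u - 1) hq).onV
                ((model2 (1, 1)).s (sqEdge1 (!i))) :=
              congrArg _ (Subtype.ext (by cases i <;> rfl))
          _ = E.s ((sqAt hC i p lam g hgc hgr (cp (!i) p - cp (!i) u - 1) hq).onE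
                (sqEdge1 (!i))) :=
              ((sqAt hC i p lam g hgc hgr (cp (!i) p - cp (!i) u - 1) hq).map_s _).symm
          _ = E.s (F hC i p lam g hgc hgr (cp (!i) p - cp (!i) u - 1)).1 :=
              congrArg E.s (sqAt_e1_not hC i p lam g hgc hgr _ hq)
          _ = E.s (F hC i p lam g hgc hgr (cp (!i) p - cp (!i) (u + vec b))).1 :=
              congrArg (fun t => E.s (F hC i p lam g hgc hgr t).1)
                (by rw [hb, cp_add, cp_vec_self]; omega)

theorem zero2_add (u : ℕ × ℕ) : (0, 0) + u = u := zero_add u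

theorem vecvec (j : Bool) : vec j + vec (!j) = (1, 1) := by cases j <;> rfl

theorem vec_le_11 (j : Bool) : vec j ≤ (1, 1) := by cases j <;> simp [vec, Prod.le_def]

theorem F_congr (t t' : ℕ) (h : t = t') :
    (F hC i p lam g hgc hgr t).1 = (F hC i p lam g hgc hgr t').1 := by rw [h]

theorem sqAt_congr (t t' : ℕ) (h : t = t') (h1 : t + 1 ≤ cp (!i) p)
    (h2 : t' + 1 ≤ cp (!i) p) :
    sqAt hC i p lam g hgc hgr t h1 = sqAt hC i p lam g hgc hgr t' h2 := by subst h; rfl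

theorem ext2_restrict :
    restrict2 (ext2 hC i p lam g hgc hgr) p (le_add_vec p i) = lam := by
  refine CGMor.ext' (fun z => ?_) (fun e => ?_)
  · exact extV_le hC i p lam g hgc hgr z.1 z.2 _
  · obtain ⟨⟨u, b⟩, he⟩ := e
    exact extE_le hC i p lam g hgc hgr u b he _

theorem ext2_corner :
    (ext2 hC i p lam g hgc hgr).onE ⟨(p, i), le_refl _⟩ = g := by
  have h1 : ¬p + vec i ≤ p := by
    rw [le_iff_cp i, cp_add, cp_vec_self]
    omega
  show extE hC i p lam g hgc hgr ⟨(p, i), le_refl _⟩ = g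
  rw [extE_newF hC i p lam g hgc hgr p h1 _, Nat.sub_self]
  rfl

theorem ext2_compat (hlam : Compatible2 C lam) :
    Compatible2 C (ext2 hC i p lam g hgc hgr) := by
  rintro ψ ⟨b₀, hb, hv, he⟩
  by_cases h1 : b₀ + (1, 1) ≤ p
  · refine hlam ψ ⟨b₀, h1, fun z => ?_, fun e => ?_⟩
    · exact (extV_le hC i p lam g hgc hgr (z.1 + b₀) (occ_vertex_le z.2 h1) _).symm.trans (hv z)
    · exact (extE_le hC i p lam g hgc hgr (e.1.1 + b₀) e.1.2
        (occ_edge_le e.2 h1) _).symm.trans (he e)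
  · have hsq : cp i b₀ = cp i p ∧ cp (!i) b₀ + 1 ≤ cp (!i) p := newSq i hb h1
    have ht : cp (!i) p - cp (!i) b₀ - 1 + 1 ≤ cp (!i) p := by omega
    have hψ : ψ = sqAt hC i p lam g hgc hgr (cp (!i) p - cp (!i) b₀ - 1) ht := by
      refine square_ext (fun e => ?_)
      rcases square_edge_cases' i e with rfl | rfl | rfl | rfl
      · -- sqEdge0 i
        have pf' : b₀ + vec i ≤ p + vec i :=
          le_trans (add_le_add_right (vec_le_11 i) b₀) hb
        have hno : ¬b₀ + vec i ≤ p := by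
          rw [le_iff_cp i, cp_add, cp_vec_self]
          omega
        calc ψ.onE (sqEdge0 i)
            = extE hC i p lam g hgc hgr ⟨(b₀, i), pf'⟩ :=
              (he _).symm.trans (congrArg (extE hC i p lam g hgc hgr)
                (Subtype.ext (Prod.ext (zero2_add b₀) rfl)))
          _ = (F hC i p lam g hgc hgr (cp (!i) p - cp (!i) b₀)).1 :=
              extE_newF hC i p lam g hgc hgr b₀ hno pf'
          _ = (F hC i p lam g hgc hgr (cp (!i) p - cp (!i) b₀ - 1 + 1)).1 :=
              F_congr hC i p lam g hgc hgr _ _ (by omega)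
          _ = (sqAt hC i p lam g hgc hgr (cp (!i) p - cp (!i) b₀ - 1) ht).onE (sqEdge0 i) :=
              (sqAt_e0_self hC i p lam g hgc hgr _ ht).symm
      · -- sqEdge0 !i
        have hle : b₀ + vec (!i) ≤ p := by
          rw [le_iff_cp i, cp_add, cp_add, cp_not_vec, cp_vec_self]
          omega
        calc ψ.onE (sqEdge0 (!i))
            = extE hC i p lam g hgc hgr ⟨(b₀, !i), hle.trans (le_add_vec p i)⟩ :=
              (he _).symm.trans (congrArg (extE hC i p lam g hgc hgr)
                (Subtype.ext (Prod.ext (zero2_add b₀) rfl)))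
          _ = lam.onE ⟨(b₀, !i), hle⟩ :=
              extE_le hC i p lam g hgc hgr b₀ (!i) hle _
          _ = lam.onE (vEdge i p (cp (!i) p - (cp (!i) p - cp (!i) b₀ - 1) - 1) (by omega)) := by
              refine congrArg lam.onE (Subtype.ext (Prod.ext ?_ rfl))
              show b₀ = mk2 i (cp i p) (cp (!i) p - (cp (!i) p - cp (!i) b₀ - 1) - 1)
              conv_lhs => rw [← mk2_cp i b₀]
              rw [hsq.1]
              congr 1
              omega
          _ = (sqAt hC i p lam g hgc hgr (cp (!i) p - cp (!i) b₀ - 1) ht).onE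
                (sqEdge0 (!i)) :=
              (sqAt_e0_not hC i p lam g hgc hgr _ ht).symm
      · -- sqEdge1 i : edge (vec i, !i)
        have hE : (vec i + b₀) + vec (!i) = b₀ + (1, 1) := by
          rw [add_comm (vec i) b₀, add_assoc, vecvec]
        have pf' : (vec i + b₀) + vec (!i) ≤ p + vec i := hE.trans_le hb
        have hno : ¬(vec i + b₀) + vec (!i) ≤ p := fun hcon => h1 (hE.symm.trans_le hcon)
        have hq' : cp (!i) p - cp (!i) (vec i + b₀) - 1 + 1 ≤ cp (!i) p := by
          rw [cp_add, cp_vec_not]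
          omega
        calc ψ.onE (sqEdge1 i)
            = extE hC i p lam g hgc hgr ⟨(vec i + b₀, !i), pf'⟩ := (he _).symm
          _ = (sqAt hC i p lam g hgc hgr (cp (!i) p - cp (!i) (vec i + b₀) - 1) hq').onE
                (sqEdge1 i) :=
              extE_newW hC i p lam g hgc hgr (vec i + b₀) hno pf' hq'
          _ = (sqAt hC i p lam g hgc hgr (cp (!i) p - cp (!i) b₀ - 1) ht).onE (sqEdge1 i) := by
              rw [sqAt_congr hC i p lam g hgc hgr _ _
                (by rw [cp_add, cp_vec_not]; omega) hq' ht]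
      · -- sqEdge1 !i : edge (vec !i, !!i)
        have hE : (vec (!i) + b₀) + vec (!(!i)) = b₀ + (1, 1) := by
          rw [add_comm (vec (!i)) b₀, add_assoc, vecvec]
        have pf' : (vec (!i) + b₀) + vec (!(!i)) ≤ p + vec i := hE.trans_le hb
        have hno : ¬(vec (!i) + b₀) + vec (!(!i)) ≤ p := fun hcon => h1 (hE.symm.trans_le hcon)
        calc ψ.onE (sqEdge1 (!i))
            = extE hC i p lam g hgc hgr ⟨(vec (!i) + b₀, !(!i)), pf'⟩ := (he _).symm
          _ = (F hC i p lam g hgc hgr (cp (!i) p - cp (!i) (vec (!i) + b₀))).1 :=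
              extE_newF' hC i p lam g hgc hgr (vec (!i) + b₀) (!(!i)) (Bool.not_not i)
                hno pf'
          _ = (F hC i p lam g hgc hgr (cp (!i) p - cp (!i) b₀ - 1)).1 :=
              F_congr hC i p lam g hgc hgr _ _ (by rw [cp_add, cp_vec_self]; omega)
          _ = (sqAt hC i p lam g hgc hgr (cp (!i) p - cp (!i) b₀ - 1) ht).onE
                (sqEdge1 (!i)) :=
              (sqAt_e1_not hC i p lam g hgc hgr _ ht).symm
    rw [hψ]
    exact sqAt_mem hC i p lam g hgc hgr _ ht

theorem keysq (Λ' : CGMor (model2 (p + vec i)) E) (hcomp : Compatible2 C Λ')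
    (hres : restrict2 Λ' p (le_add_vec p i) = lam) (t : ℕ) (h : t + 1 ≤ cp (!i) p)
    (hIH : ∀ pf, Λ'.onE ⟨(mk2 i (cp i p) (cp (!i) p - t), i), pf⟩ =
      (F hC i p lam g hgc hgr t).1)
    (hcell : mk2 i (cp i p) (cp (!i) p - t - 1) + (1, 1) ≤ p + vec i) :
    cellSquare Λ' (mk2 i (cp i p) (cp (!i) p - t - 1)) hcell =
      sqAt hC i p lam g hgc hgr t h := by
  have hres' : ∀ (u : ℕ × ℕ) (b : Bool) (hub : u + vec b ≤ p) pf,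
      Λ'.onE ⟨(u, b), pf⟩ = lam.onE ⟨(u, b), hub⟩ :=
    fun u b hub pf => congrFun (congrArg CGMor.onE hres) ⟨(u, b), hub⟩
  refine sqAt_unique hC i p lam g hgc hgr t h _
    (hcomp _ (cellSquare_occurs Λ' _ hcell)) ?_ ?_
  · refine Eq.trans ?_ (congrArg
      (fun b => (cellSquare Λ' (mk2 i (cp i p) (cp (!i) p - t - 1)) hcell).onE (sqEdge0 b))
      (vE_colour i p lam t h).symm)
    calc lam.onE (vEdge i p (cp (!i) p - t - 1) (by omega))
        = Λ'.onE ⟨(mk2 i (cp i p) (cp (!i) p - t - 1), !i),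
            (vEdge i p (cp (!i) p - t - 1) (by omega)).2.trans (le_add_vec p i)⟩ :=
          (hres' _ _ (vEdge i p (cp (!i) p - t - 1) (by omega)).2 _).symm
      _ = (cellSquare Λ' (mk2 i (cp i p) (cp (!i) p - t - 1)) hcell).onE (sqEdge0 (!i)) :=
          congrArg Λ'.onE (Subtype.ext (Prod.ext (zero2_add _).symm rfl))
  · refine Eq.trans ?_ (congrArg
      (fun b => (cellSquare Λ' (mk2 i (cp i p) (cp (!i) p - t - 1)) hcell).onE (sqEdge1 b))
      (vE_colour i p lam t h).symm)
    have hpos : mk2 i (cp i p) (cp (!i) p - t) =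
        vec (!i) + mk2 i (cp i p) (cp (!i) p - t - 1) := by
      rw [add_comm, mk2_add_vec_not]
      congr 1
      omega
    calc (F hC i p lam g hgc hgr t).1
        = Λ'.onE ⟨(mk2 i (cp i p) (cp (!i) p - t), i), by
            rw [mk2_add_vec_self, le_iff_cp i, cp_add, cp_add, cp_vec_self, cp_vec_not,
              cp_mk2_self, cp_mk2_not]
            omega⟩ := (hIH _).symm
      _ = (cellSquare Λ' (mk2 i (cp i p) (cp (!i) p - t - 1)) hcell).onE (sqEdge1 (!i)) :=
          congrArg Λ'.onE (Subtype.ext (Prod.ext hpos (Bool.not_not i).symm))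

theorem keyH (Λ' : CGMor (model2 (p + vec i)) E) (hcomp : Compatible2 C Λ')
    (hres : restrict2 Λ' p (le_add_vec p i) = lam)
    (hcorner : Λ'.onE ⟨(p, i), le_refl _⟩ = g) :
    ∀ t, t ≤ cp (!i) p → ∀ pf, Λ'.onE ⟨(mk2 i (cp i p) (cp (!i) p - t), i), pf⟩ =
      (F hC i p lam g hgc hgr t).1 := by
  intro t
  induction t with
  | zero =>
    intro ht pf
    have hp : (mk2 i (cp i p) (cp (!i) p - 0) : ℕ × ℕ) = p := by rw [Nat.sub_zero, mk2_cp]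
    calc Λ'.onE ⟨(mk2 i (cp i p) (cp (!i) p - 0), i), pf⟩
        = Λ'.onE ⟨(p, i), le_refl _⟩ := congrArg Λ'.onE (Subtype.ext (Prod.ext hp rfl))
      _ = g := hcorner
  | succ t ih =>
    intro ht pf
    have h : t + 1 ≤ cp (!i) p := ht
    have hcell : mk2 i (cp i p) (cp (!i) p - t - 1) + (1, 1) ≤ p + vec i :=
      cell_le i (by omega)
    have hsq := keysq hC i p lam g hgc hgr Λ' hcomp hres t h
      (fun pf' => ih (by omega) pf') hcell
    calc Λ'.onE ⟨(mk2 i (cp i p) (cp (!i) p - (t + 1)), i), pf⟩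
        = (cellSquare Λ' (mk2 i (cp i p) (cp (!i) p - t - 1)) hcell).onE (sqEdge0 i) :=
          congrArg Λ'.onE (Subtype.ext (Prod.ext (zero2_add _).symm rfl))
      _ = (sqAt hC i p lam g hgc hgr t h).onE (sqEdge0 i) := by rw [hsq]
      _ = (F hC i p lam g hgc hgr (t + 1)).1 := sqAt_e0_self hC i p lam g hgc hgr t h

theorem append_unique (Λ' : CGMor (model2 (p + vec i)) E) (hcomp : Compatible2 C Λ')
    (hres : restrict2 Λ' p (le_add_vec p i) = lam)
    (hcorner : Λ'.onE ⟨(p, i), le_refl _⟩ = g) :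
    Λ' = ext2 hC i p lam g hgc hgr := by
  have hres' : ∀ (u : ℕ × ℕ) (b : Bool) (hub : u + vec b ≤ p) pf,
      Λ'.onE ⟨(u, b), pf⟩ = lam.onE ⟨(u, b), hub⟩ :=
    fun u b hub pf => congrFun (congrArg CGMor.onE hres) ⟨(u, b), hub⟩
  have hresV : ∀ (z : ℕ × ℕ) (hz : z ≤ p) pf, Λ'.onV ⟨z, pf⟩ = lam.onV ⟨z, hz⟩ :=
    fun z hz pf => congrFun (congrArg CGMor.onV hres) ⟨z, hz⟩
  refine CGMor.ext' (fun z => ?_) (fun e => ?_)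
  · obtain ⟨z, pf⟩ := z
    by_cases h : z ≤ p
    · exact (hresV z h pf).trans (extV_le hC i p lam g hgc hgr z h pf).symm
    · have hz : cp i z = cp i p + 1 ∧ cp (!i) z ≤ cp (!i) p := newV2 i pf h
      have hzpos : z = mk2 i (cp i p) (cp (!i) z) + vec i := by
        rw [mk2_add_vec_self, ← hz.1, mk2_cp]
      have pfe : mk2 i (cp i p) (cp (!i) z) + vec i ≤ p + vec i := hzpos ▸ pf
      have hidx : cp (!i) p - (cp (!i) p - cp (!i) z) = cp (!i) z := Nat.sub_sub_self hz.2
      calc Λ'.onV ⟨z, pf⟩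
          = Λ'.onV ⟨mk2 i (cp i p) (cp (!i) z) + vec i, pfe⟩ :=
            congrArg Λ'.onV (Subtype.ext hzpos)
        _ = E.s (Λ'.onE ⟨(mk2 i (cp i p) (cp (!i) z), i), pfe⟩) :=
            onV_eq_s Λ' _ i pfe
        _ = E.s (Λ'.onE ⟨(mk2 i (cp i p) (cp (!i) p - (cp (!i) p - cp (!i) z)), i),
              le_of_eq_of_le (congrArg (fun x => mk2 i (cp i p) x + vec i) hidx) pfe⟩) :=
            congrArg (fun x => E.s (Λ'.onE x))
              (Subtype.ext (Prod.ext (congrArg (mk2 i (cp i p)) hidx.symm) rfl))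
        _ = E.s (F hC i p lam g hgc hgr (cp (!i) p - cp (!i) z)).1 :=
            congrArg E.s (keyH hC i p lam g hgc hgr Λ' hcomp hres hcorner
              (cp (!i) p - cp (!i) z) (Nat.sub_le _ _) _)
        _ = extV hC i p lam g hgc hgr ⟨z, pf⟩ :=
            (extV_new hC i p lam g hgc hgr z h pf).symm
  · obtain ⟨⟨u, b⟩, pf⟩ := e
    by_cases h1 : u + vec b ≤ p
    · exact (hres' u b h1 pf).trans (extE_le hC i p lam g hgc hgr u b h1 pf).symm
    · by_cases h2 : b = i
      · have hui : cp i u = cp i p ∧ cp (!i) u ≤ cp (!i) p := newE_i i (h2 ▸ pf) (h2 ▸ h1)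
        have hupos : (u, b) = ((mk2 i (cp i p)
            (cp (!i) p - (cp (!i) p - cp (!i) u)) : ℕ × ℕ), i) := by
          refine Prod.ext ?_ h2
          show u = mk2 i (cp i p) (cp (!i) p - (cp (!i) p - cp (!i) u))
          rw [Nat.sub_sub_self hui.2, ← hui.1, mk2_cp]
        calc Λ'.onE ⟨(u, b), pf⟩
            = Λ'.onE ⟨(mk2 i (cp i p) (cp (!i) p - (cp (!i) p - cp (!i) u)), i),
                (congrArg (fun x : (ℕ × ℕ) × Bool => x.1 + vec x.2 ≤ p + vec i) hupos) ▸ pf⟩ :=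
              congrArg Λ'.onE (Subtype.ext hupos)
          _ = (F hC i p lam g hgc hgr (cp (!i) p - cp (!i) u)).1 :=
              keyH hC i p lam g hgc hgr Λ' hcomp hres hcorner
                (cp (!i) p - cp (!i) u) (Nat.sub_le _ _) _
          _ = extE hC i p lam g hgc hgr ⟨(u, b), pf⟩ :=
              (extE_newF' hC i p lam g hgc hgr u b h2 h1 pf).symm
      · have hb : b = !i := by cases b <;> cases i <;> simp_all
        have hun : cp i u = cp i p + 1 ∧ cp (!i) u + 1 ≤ cp (!i) p :=
          newE_not i (hb ▸ pf) (hb ▸ h1)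
        have h : (cp (!i) p - cp (!i) u - 1) + 1 ≤ cp (!i) p := by omega
        have hcell : mk2 i (cp i p) (cp (!i) p - (cp (!i) p - cp (!i) u - 1) - 1) + (1, 1) ≤
            p + vec i := cell_le i (by omega)
        have hsq := keysq hC i p lam g hgc hgr Λ' hcomp hres (cp (!i) p - cp (!i) u - 1) h
          (fun pf' => keyH hC i p lam g hgc hgr Λ' hcomp hres hcorner
            (cp (!i) p - cp (!i) u - 1) (by omega) pf') hcell
        calc Λ'.onE ⟨(u, b), pf⟩
            = (cellSquare Λ'
                (mk2 i (cp i p) (cp (!i) p - (cp (!i) p - cp (!i) u - 1) - 1)) hcell).onE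
                (sqEdge1 i) := by
              refine congrArg Λ'.onE (Subtype.ext (Prod.ext ?_ hb))
              show u = vec i + mk2 i (cp i p) (cp (!i) p - (cp (!i) p - cp (!i) u - 1) - 1)
              rw [add_comm, mk2_add_vec_self]
              conv_lhs => rw [← mk2_cp i u]
              rw [hun.1]
              congr 1
              omega
          _ = (sqAt hC i p lam g hgc hgr (cp (!i) p - cp (!i) u - 1) h).onE (sqEdge1 i) := by
              rw [hsq]
          _ = extE hC i p lam g hgc hgr ⟨(u, b), pf⟩ :=
              (extE_newW' hC i p lam g hgc hgr u b hb h1 pf h).symm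


end Append

section AppendAPI

variable {E : TwoColouredGraph} {C : Set (Square2 E)}

theorem append_existsUnique (hC : IsComplete2 E C) (i : Bool) (p : ℕ × ℕ)
    (lam : CGMor (model2 p) E) (hlam : Compatible2 C lam) (g : E.Edge)
    (hgc : E.c g = i) (hgr : E.r g = lam.onV ⟨p, le_refl p⟩) :
    ∃! Λ : CGMor (model2 (p + vec i)) E,
      Compatible2 C Λ ∧ restrict2 Λ p (le_add_vec p i) = lam ∧
        Λ.onE ⟨(p, i), le_refl _⟩ = g :=
  ⟨ext2 hC i p lam g hgc hgr,
    ⟨ext2_compat hC i p lam g hgc hgr hlam, ext2_restrict hC i p lam g hgc hgr,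
      ext2_corner hC i p lam g hgc hgr⟩,
    fun Λ' h' => append_unique hC i p lam g hgc hgr Λ' h'.1 h'.2.1 h'.2.2⟩

end AppendAPI

section Main

variable {E : TwoColouredGraph} {C : Set (Square2 E)}

theorem append_existsUnique' (hC : IsComplete2 E C) (i : Bool) (p : ℕ × ℕ)
    (lam : CGMor (model2 p) E) (hlam : Compatible2 C lam) (g : E.Edge)
    (hgc : E.c g = i) (hgr : E.r g = lam.onV ⟨p, le_refl p⟩)
    (P : ℕ × ℕ) (hP : p + vec i = P) :
    ∃! Λ : CGMor (model2 P) E,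
      Compatible2 C Λ ∧ restrict2 Λ p (le_of_le_of_eq (le_add_vec p i) hP) = lam ∧
        Λ.onE ⟨(p, i), hP.le⟩ = g := by
  subst hP
  exact append_existsUnique hC i p lam hlam g hgc hgr

theorem exists_decomp (n : ℕ × ℕ) (h : n ≠ (0, 0)) :
    ∃ (i : Bool) (n' : ℕ × ℕ), n' + vec i = n ∧ n'.1 + n'.2 + 1 = n.1 + n.2 := by
  obtain ⟨a, b⟩ := n
  rcases Nat.eq_zero_or_pos a with rfl | ha
  · have hb : b ≠ 0 := by simpa using h
    exact ⟨true, (0, b - 1), Prod.ext (by simp [vec, Prod.mk_add_mk])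
      (by simp [vec, Prod.mk_add_mk]; omega), by simp; omega⟩
  · exact ⟨false, (a - 1, b), Prod.ext (by simp [vec, Prod.mk_add_mk]; omega)
      (by simp [vec, Prod.mk_add_mk]), by simp; omega⟩

theorem comp_zero (C : Set (Square2 E)) (m : ℕ × ℕ)
    (μ : CGMor (model2 m) E) (ν : CGMor (model2 (0, 0)) E)
    (hμ : Compatible2 C μ) (hsr : μ.onV ⟨m, le_refl m⟩ = ν.onV ⟨0, zero_le2 (0, 0)⟩) :
    ∃! lam : CGMor (model2 (m + (0, 0))) E,
      Compatible2 C lam ∧ restrict2 lam m (le_self_add2 m (0, 0)) = μ ∧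
        starRestrict2 lam m (0, 0) (le_refl (m + (0, 0))) = ν := by
  refine ⟨μ, ⟨hμ, rfl, ?_⟩, fun Λ' h' => ?_⟩
  · refine CGMor.ext' (fun z => ?_) (fun e => (model2_zero_no_edge e).elim)
    obtain ⟨z, hz⟩ := z
    obtain rfl : z = (0, 0) := le_antisymm hz (zero_le2 z)
    exact hsr
  · refine CGMor.ext' (fun z => ?_) (fun e => ?_)
    · exact congrFun (congrArg CGMor.onV h'.2.1) ⟨z.1, z.2⟩
    · exact congrFun (congrArg CGMor.onE h'.2.1) ⟨e.1, e.2⟩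

theorem comp_exists_unique (hC : IsComplete2 E C) :
    ∀ (N : ℕ) (n : ℕ × ℕ), n.1 + n.2 ≤ N →
    ∀ (m : ℕ × ℕ) (μ : CGMor (model2 m) E) (ν : CGMor (model2 n) E),
      Compatible2 C μ → Compatible2 C ν →
      μ.onV ⟨m, le_refl m⟩ = ν.onV ⟨0, zero_le2 n⟩ →
      ∃! lam : CGMor (model2 (m + n)) E,
        Compatible2 C lam ∧ restrict2 lam m (le_self_add2 m n) = μ ∧
          starRestrict2 lam m n (le_refl (m + n)) = ν := by
  intro N
  induction N with
  | zero =>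
    intro n hn m μ ν hμ hν hsr
    have h0 : n = (0, 0) := by
      have h1 : n.1 = 0 ∧ n.2 = 0 := by omega
      exact Prod.ext h1.1 h1.2
    subst h0
    exact comp_zero C m μ ν hμ hsr
  | succ N ih =>
    intro n hn m μ ν hμ hν hsr
    by_cases h0 : n = (0, 0)
    · subst h0
      exact comp_zero C m μ ν hμ hsr
    · obtain ⟨i, n', hn', hcount⟩ := exists_decomp n h0
      subst hn'
      have hν' : Compatible2 C (restrict2 ν n' (le_add_vec n' i)) :=
        restrict2_compatible hν n' (le_add_vec n' i)
      have hsr' : μ.onV ⟨m, le_refl m⟩ =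
          (restrict2 ν n' (le_add_vec n' i)).onV ⟨0, zero_le2 n'⟩ := hsr
      obtain ⟨lam', ⟨hlc, hlr, hls⟩, hlu⟩ :=
        ih n' (by omega) m μ (restrict2 ν n' (le_add_vec n' i)) hμ hν' hsr'
      have hgc : E.c (ν.onE ⟨(n', i), le_refl _⟩) = i := ν.map_c _
      have hgr : E.r (ν.onE ⟨(n', i), le_refl _⟩) = lam'.onV ⟨m + n', le_refl _⟩ := by
        have h1 : E.r (ν.onE ⟨(n', i), le_refl _⟩) = ν.onV ⟨n', le_add_vec n' i⟩ :=
          ν.map_r _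
        have h2 : lam'.onV ⟨m + n', le_refl _⟩ =
            (restrict2 ν n' (le_add_vec n' i)).onV ⟨n', le_refl n'⟩ :=
          congrFun (congrArg CGMor.onV hls) ⟨n', le_refl n'⟩
        exact h1.trans h2.symm
      obtain ⟨Λ, ⟨hΛc, hΛr, hΛe⟩, hΛu⟩ :=
        append_existsUnique' hC i (m + n') lam' hlc (ν.onE ⟨(n', i), le_refl _⟩) hgc hgr
          (m + (n' + vec i)) (add_assoc m n' (vec i))
      have hgr2 : E.r (ν.onE ⟨(n', i), le_refl _⟩) =
          (restrict2 ν n' (le_add_vec n' i)).onV ⟨n', le_refl n'⟩ := ν.map_r _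
      have APν := append_existsUnique' hC i n' (restrict2 ν n' (le_add_vec n' i)) hν'
        (ν.onE ⟨(n', i), le_refl _⟩) hgc hgr2 (n' + vec i) rfl
      refine ⟨Λ, ⟨hΛc, ?_, ?_⟩, ?_⟩
      · refine Eq.trans ?_ hlr
        exact congrArg (fun f => restrict2 f m (le_self_add2 m n')) hΛr
      · refine APν.unique ⟨starRestrict2_compatible hΛc m (n' + vec i) (le_refl _), ?_, ?_⟩
          ⟨hν, rfl, rfl⟩
        · refine Eq.trans ?_ hls
          exact congrArg (fun f => starRestrict2 f m n' (le_refl _)) hΛr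
        · exact hΛe
      · rintro Λ₂ ⟨h2c, h2r, h2s⟩
        refine hΛu Λ₂ ⟨h2c, ?_, ?_⟩
        · refine hlu (restrict2 Λ₂ (m + n')
            (le_of_le_of_eq (le_add_vec (m + n') i) (add_assoc m n' (vec i))))
            ⟨restrict2_compatible h2c _ _, ?_, ?_⟩
          · exact h2r
          · exact congrArg (fun f => restrict2 f n' (le_add_vec n' i)) h2s
        · exact congrFun (congrArg CGMor.onE h2s) ⟨(n', i), le_refl _⟩

end Main

end UC2

-- Statement 1
theorem unique_composition_2 (E : TwoColouredGraph) (C : Set (Square2 E))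
    (hC : IsComplete2 E C) (m n : ℕ × ℕ)
    (μ : CGMor (model2 m) E) (ν : CGMor (model2 n) E)
    (hμ : Compatible2 C μ) (hν : Compatible2 C ν)
    (hsr : μ.onV ⟨m, le_refl m⟩ = ν.onV ⟨0, zero_le2 n⟩) :
    ∃! lam : CGMor (model2 (m + n)) E,
      Compatible2 C lam ∧ restrict2 lam m (le_self_add2 m n) = μ ∧
        starRestrict2 lam m n (le_refl (m + n)) = ν :=
  UC2.comp_exists_unique hC (n.1 + n.2) n (le_refl _) m μ ν hμ hν hsr
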